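/- In the group algebra ℤ[B_n] (n ≥ 1), the product Φ_1 Φ_2 ⋯ Φ_n equals the sum of all elements of B_n, where Φ_j = 1 + ∑_{−j ≤ i < j} t_{ij}. -/

import Mathlib

/-- The signed transposition `t_{ij}` of `ℤ`, exchanging `i ↔ j` and `-i ↔ -j`
(when `i = -j` this is the sign change negating `j`). -/
def bt (i j : ℤ) : Equiv.Perm ℤ :=
  if i = -j then Equiv.swap i j else Equiv.swap i j * Equiv.swap (-i) (-j)

/-- `w` is a signed permutation in the hyperoctahedral group `B_n`. -/
def IsSignedPerm (n : ℕ) (w : Equiv.Perm ℤ) : Prop :=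
  (∀ x : ℤ, w (-x) = -w x) ∧ ∀ x : ℤ, (n : ℤ) < |x| → w x = x

/-- `Φ_j = 1 + ∑_{-j ≤ i < j, i ≠ 0} t_{ij} ∈ ℤ[B_n]`. -/
noncomputable def phiB (j : ℕ) : MonoidAlgebra ℤ (Equiv.Perm ℤ) :=
  1 + ∑ i ∈ (Finset.Icc (-(j : ℤ)) ((j : ℤ) - 1)).erase 0,
      MonoidAlgebra.of ℤ (Equiv.Perm ℤ) (bt i (j : ℤ))

/-- coset representative: identity if `k = m`, else `bt k m`. -/
theorem Equiv.Perm.apply_inv_self (f : Equiv.Perm ℤ) (x : ℤ) : f (f⁻¹ x) = x :=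
  Equiv.apply_symm_apply f x

theorem Equiv.Perm.inv_apply_self (f : Equiv.Perm ℤ) (x : ℤ) : f⁻¹ (f x) = x :=
  Equiv.symm_apply_apply f x

def rp (k m : ℤ) : Equiv.Perm ℤ := if k = m then 1 else bt k m

lemma bt_apply (i j x : ℤ) :
    bt i j x = if i = -j then Equiv.swap i j x
      else (Equiv.swap i j * Equiv.swap (-i) (-j)) x := by
  unfold bt; split_ifs <;> rfl

lemma rp_apply (k m x : ℤ) : rp k m x = if k = m then x else bt k m x := by
  unfold rp; split_ifs <;> rfl

section rpLemmas
variable {m k : ℤ} (hm : 0 < m) (h1 : -m ≤ k) (h2 : k ≤ m) (h3 : k ≠ 0)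
include hm h1 h2 h3

lemma rp_apply_m : rp k m m = k := by
  simp only [rp_apply, bt_apply, Equiv.Perm.mul_apply, Equiv.swap_apply_def]
  split_ifs <;> omega

lemma rp_apply_negm : rp k m (-m) = -k := by
  simp only [rp_apply, bt_apply, Equiv.Perm.mul_apply, Equiv.swap_apply_def]
  split_ifs <;> omega

lemma rp_neg (x : ℤ) : rp k m (-x) = -(rp k m x) := by
  simp only [rp_apply, bt_apply, Equiv.Perm.mul_apply, Equiv.swap_apply_def]
  split_ifs <;> omega

lemma rp_fix (x : ℤ) (hx : m < |x|) : rp k m x = x := by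
  simp only [rp_apply, bt_apply, Equiv.Perm.mul_apply, Equiv.swap_apply_def]
  rcases abs_cases x with ⟨h, h'⟩ | ⟨h, h'⟩ <;> split_ifs <;> omega

lemma rp_apply_explicit (x : ℤ) : rp k m x =
    if x = k then m else if x = m then k else if x = -k then -m
      else if x = -m then -k else x := by
  simp only [rp_apply, bt_apply, Equiv.Perm.mul_apply, Equiv.swap_apply_def]
  split_ifs <;> omega

lemma rp_invol : rp k m * rp k m = 1 := by
  apply Equiv.ext; intro x
  rw [Equiv.Perm.mul_apply, Equiv.Perm.one_apply, rp_apply_explicit hm h1 h2 h3,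
    rp_apply_explicit hm h1 h2 h3]
  split_ifs <;> omega

end rpLemmas

lemma isp_one (n : ℕ) : IsSignedPerm n 1 :=
  ⟨fun x => rfl, fun x _ => rfl⟩

lemma isp_mul {n : ℕ} {w v : Equiv.Perm ℤ} (hw : IsSignedPerm n w)
    (hv : IsSignedPerm n v) : IsSignedPerm n (w * v) :=
  ⟨fun x => by simp only [Equiv.Perm.mul_apply, hv.1, hw.1],
   fun x hx => by simp only [Equiv.Perm.mul_apply, hv.2 x hx, hw.2 x hx]⟩

lemma isp_inv {n : ℕ} {w : Equiv.Perm ℤ} (hw : IsSignedPerm n w) :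
    IsSignedPerm n w⁻¹ := by
  constructor
  · intro x
    apply w.injective
    rw [Equiv.Perm.apply_inv_self, hw.1, Equiv.Perm.apply_inv_self]
  · intro x hx
    conv_lhs => rw [← hw.2 x hx]
    exact Equiv.Perm.inv_apply_self w x

lemma isp_zero {n : ℕ} {w : Equiv.Perm ℤ} (hw : IsSignedPerm n w) : w 0 = 0 := by
  have := hw.1 0
  simp only [neg_zero] at this
  omega

lemma isp_bound {n : ℕ} {w : Equiv.Perm ℤ} (hw : IsSignedPerm n w) {x : ℤ}
    (hx : |x| ≤ (n : ℤ)) : |w x| ≤ (n : ℤ) := by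
  by_contra h
  push_neg at h
  have h2 := hw.2 (w x) h
  have h3 := w.injective h2
  rw [h3] at h
  omega

lemma isp_mono {n n' : ℕ} (h : n ≤ n') {w : Equiv.Perm ℤ}
    (hw : IsSignedPerm n w) : IsSignedPerm n' w := by
  refine ⟨hw.1, fun x hx => hw.2 x ?_⟩
  have : (n : ℤ) ≤ (n' : ℤ) := by exact_mod_cast h
  omega

lemma isp_finite (n : ℕ) : {w : Equiv.Perm ℤ | IsSignedPerm n w}.Finite := by
  rw [← Set.finite_coe_iff]
  set T := Finset.Icc (-(n : ℤ)) (n : ℤ) with hT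
  have hmem : ∀ w : {w : Equiv.Perm ℤ // IsSignedPerm n w},
      ∀ x : T, (w.1 x.1 : ℤ) ∈ T := by
    rintro ⟨w, hw⟩ ⟨x, hx⟩
    simp only [hT, Finset.mem_Icc] at hx ⊢
    have h1 : |x| ≤ (n : ℤ) := abs_le.mpr hx
    have h2 := isp_bound hw h1
    exact abs_le.mp h2
  have hinj : Function.Injective
      (fun w : {w : Equiv.Perm ℤ // IsSignedPerm n w} =>
        fun x : T => (⟨w.1 x.1, hmem w x⟩ : T)) := by
    intro w w' h
    apply Subtype.ext
    apply Equiv.ext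
    intro x
    by_cases hx : (n : ℤ) < |x|
    · rw [w.2.2 x hx, w'.2.2 x hx]
    · push_neg at hx
      have hxT : x ∈ T := by
        simp only [hT, Finset.mem_Icc]; exact abs_le.mp hx
      have := congrFun h ⟨x, hxT⟩
      exact Subtype.ext_iff.mp this
  exact Finite.of_injective _ hinj

lemma phiB_succ (n : ℕ) :
    phiB (n + 1) = ∑ k ∈ (Finset.Icc (-((n : ℤ) + 1)) ((n : ℤ) + 1)).erase 0,
      MonoidAlgebra.of ℤ (Equiv.Perm ℤ) (rp k ((n : ℤ) + 1)) := by
  have hm : ((n + 1 : ℕ) : ℤ) = (n : ℤ) + 1 := by push_cast; ring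
  rw [phiB, hm]
  set m : ℤ := (n : ℤ) + 1 with hmdef
  have hm0 : 0 < m := by omega
  have hK : (Finset.Icc (-m) m).erase 0
      = insert m ((Finset.Icc (-m) (m - 1)).erase 0) := by
    ext x
    simp only [Finset.mem_erase, Finset.mem_Icc, Finset.mem_insert]
    omega
  rw [hK, Finset.sum_insert (by simp only [Finset.mem_erase, Finset.mem_Icc]; omega)]
  have h1 : rp m m = 1 := by simp [rp]
  rw [h1, map_one]
  congr 1
  apply Finset.sum_congr rfl
  intro k hk
  simp only [Finset.mem_erase, Finset.mem_Icc] at hk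
  have hne : rp k m = bt k m := by unfold rp; rw [if_neg (by omega)]
  rw [hne]

theorem key (n : ℕ) :
    ((List.range n).map fun j => phiB (j + 1)).prod
      = ∑ w ∈ (isp_finite n).toFinset, MonoidAlgebra.of ℤ (Equiv.Perm ℤ) w := by
  induction n with
  | zero =>
    have h1 : (isp_finite 0).toFinset = {1} := by
      ext w
      simp only [Set.Finite.mem_toFinset, Set.mem_setOf_eq, Finset.mem_singleton]
      constructor
      · intro hw
        apply Equiv.ext; intro x
        rcases eq_or_ne x 0 with rfl | hx
        · simpa using isp_zero hw
        · have hx' : (0 : ℤ) < |x| := abs_pos.mpr hx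
          simpa using hw.2 x (by exact_mod_cast hx')
      · rintro rfl; exact isp_one 0
    simp only [List.range_zero, List.map_nil, List.prod_nil]
    rw [h1, Finset.sum_singleton, map_one]
  | succ n ih =>
    rw [List.range_succ, List.map_append, List.prod_append, ih]
    simp only [List.map_cons, List.map_nil, List.prod_cons, List.prod_nil, mul_one]
    rw [phiB_succ n]
    set m : ℤ := (n : ℤ) + 1 with hmdef
    have hm0 : 0 < m := by omega
    have hmabs : |m| ≤ ((n+1 : ℕ) : ℤ) := by rw [abs_of_pos hm0]; push_cast; omega
    rw [Finset.sum_mul_sum, ← Finset.sum_product']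
    apply Finset.sum_nbij' (i := fun p => p.1 * rp p.2 m)
      (j := fun v => (v * rp (v⁻¹ m) m, v⁻¹ m))
    · rintro ⟨w, k⟩ hp
      simp only [Finset.mem_product, Set.Finite.mem_toFinset, Set.mem_setOf_eq,
        Finset.mem_erase, Finset.mem_Icc] at hp
      obtain ⟨hw, hk0, hk1, hk2⟩ := hp
      simp only [Set.Finite.mem_toFinset, Set.mem_setOf_eq]
      refine isp_mul (isp_mono (Nat.le_succ n) hw) ?_
      constructor
      · exact rp_neg hm0 hk1 hk2 hk0
      · intro x hx
        refine rp_fix hm0 hk1 hk2 hk0 x ?_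
        push_cast at hx; omega
    · intro v hv
      simp only [Set.Finite.mem_toFinset, Set.mem_setOf_eq] at hv
      have hvi := isp_inv hv
      set k : ℤ := v⁻¹ m with hkdef
      have hkb : |k| ≤ ((n+1 : ℕ) : ℤ) := isp_bound hvi hmabs
      have hk0 : k ≠ 0 := by
        intro h
        have : v 0 = m := by rw [← h, hkdef, Equiv.Perm.apply_inv_self]
        rw [isp_zero hv] at this; omega
      have hk1 : -m ≤ k := by have := abs_le.mp hkb; push_cast at this; omega
      have hk2 : k ≤ m := by have := abs_le.mp hkb; push_cast at this; omega
      simp only [Finset.mem_product, Set.Finite.mem_toFinset, Set.mem_setOf_eq,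
        Finset.mem_erase, Finset.mem_Icc]
      refine ⟨⟨?_, ?_⟩, hk0, hk1, hk2⟩
      · intro x
        simp only [Equiv.Perm.mul_apply, rp_neg hm0 hk1 hk2 hk0, hv.1]
      · intro x hx
        have hxm : m ≤ |x| := by push_cast at hx; omega
        simp only [Equiv.Perm.mul_apply]
        rcases lt_or_eq_of_le hxm with h | h
        · rw [rp_fix hm0 hk1 hk2 hk0 x h, hv.2 x (by push_cast; omega)]
        · -- |x| = m, so x = m or x = -m
          rcases abs_eq (le_of_lt hm0) |>.mp h.symm with rfl | rfl
          · rw [rp_apply_m hm0 hk1 hk2 hk0, hkdef, Equiv.Perm.apply_inv_self]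
          · rw [rp_apply_negm hm0 hk1 hk2 hk0, hv.1, hkdef,
              Equiv.Perm.apply_inv_self]
    · rintro ⟨w, k⟩ hp
      simp only [Finset.mem_product, Set.Finite.mem_toFinset, Set.mem_setOf_eq,
        Finset.mem_erase, Finset.mem_Icc] at hp
      obtain ⟨hw, hk0, hk1, hk2⟩ := hp
      have hwm : w⁻¹ m = m := by
        have : w m = m := hw.2 m (by rw [abs_of_pos hm0]; push_cast; omega)
        conv_lhs => rw [← this]
        exact Equiv.Perm.inv_apply_self w m
      have hkey : (w * rp k m)⁻¹ m = k := by
        rw [mul_inv_rev, Equiv.Perm.mul_apply, hwm]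
        have hinv : (rp k m)⁻¹ = rp k m :=
          inv_eq_of_mul_eq_one_left (rp_invol hm0 hk1 hk2 hk0)
        rw [hinv, rp_apply_m hm0 hk1 hk2 hk0]
      have hfst : w * rp k m * rp ((w * rp k m)⁻¹ m) m = w := by
        rw [hkey, mul_assoc, rp_invol hm0 hk1 hk2 hk0, mul_one]
      exact Prod.ext hfst hkey
    · intro v hv
      simp only [Set.Finite.mem_toFinset, Set.mem_setOf_eq] at hv
      have hvi := isp_inv hv
      set k : ℤ := v⁻¹ m with hkdef
      have hkb : |k| ≤ ((n+1 : ℕ) : ℤ) := isp_bound hvi hmabs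
      have hk0 : k ≠ 0 := by
        intro h
        have : v 0 = m := by rw [← h, hkdef, Equiv.Perm.apply_inv_self]
        rw [isp_zero hv] at this; omega
      have hk1 : -m ≤ k := by have := abs_le.mp hkb; push_cast at this; omega
      have hk2 : k ≤ m := by have := abs_le.mp hkb; push_cast at this; omega
      show v * rp k m * rp k m = v
      rw [mul_assoc, rp_invol hm0 hk1 hk2 hk0, mul_one]
    · rintro ⟨w, k⟩ _
      exact (map_mul (MonoidAlgebra.of ℤ (Equiv.Perm ℤ)) w (rp k m)).symm

/-- In `ℤ[B_n]` (`n ≥ 1`), `Φ_1 Φ_2 ⋯ Φ_n` equals the sum of all elements of `B_n`. -/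
theorem phi_factorization_B (n : ℕ) (hn : 1 ≤ n) :
    ((List.range n).map fun j => phiB (j + 1)).prod =
      ∑ᶠ w ∈ {w : Equiv.Perm ℤ | IsSignedPerm n w},
        MonoidAlgebra.of ℤ (Equiv.Perm ℤ) w := by
  rw [finsum_mem_eq_finite_toFinset_sum _ (isp_finite n)]
  exact key n
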